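/- arXiv:1708.06846 — 2 statements merged into one kernel-verified Lean document; each statement's English description precedes it below -/
import Mathlib

section
/- Let AC(X) be a deterministic, decomposable, and smooth arithmetic circuit computing a factor f(X), and let AC_max be the maximizer circuit obtained by replacing every +-node with a max-node. Then for every partial instantiation y of a subset Y ⊆ X, AC_max(y) = max over full instantiations x compatible with y of f(x). -/
/-- An arithmetic circuit over variables `ι` with values `α`: leaves are indicator
variables `λ_{i,v}` or real parameters; internal nodes are sums or products. -/
inductive AC (ι α : Type) : Type where
  | ind (i : ι) (v : α)
  | param (θ : ℝ)
  | sum (l r : AC ι α)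
  | prod (l r : AC ι α)

namespace AC

variable {ι α : Type} [Fintype ι] [DecidableEq ι] [Fintype α] [DecidableEq α]

/-- Evaluate the circuit under a circuit input `Λ` assigning 0/1 to each indicator. -/
def eval (Λ : ι → α → Bool) : AC ι α → ℝ
  | ind i v => if Λ i v then 1 else 0
  | param θ => θ
  | sum l r => l.eval Λ + r.eval Λ
  | prod l r => l.eval Λ * r.eval Λ

/-- Evaluate the maximizer circuit (sum nodes replaced by max nodes). -/
def evalMax (Λ : ι → α → Bool) : AC ι α → ℝ
  | ind i v => if Λ i v then 1 else 0
  | param θ => θ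
  | sum l r => max (l.evalMax Λ) (r.evalMax Λ)
  | prod l r => l.evalMax Λ * r.evalMax Λ

/-- The circuit input corresponding to a full instantiation `x`. -/
def inputOf (x : ι → α) : ι → α → Bool := fun i v => decide (x i = v)

/-- The circuit input corresponding to a partial instantiation `y`:
an indicator is set to 1 iff its value is compatible with `y`. -/
def pinputOf (y : ι → Option α) : ι → α → Bool := fun i v =>
  match y i with
  | none => true
  | some w => decide (w = v)

/-- The value `AC(x)` of the circuit at a full instantiation `x`. -/
def evalAt (x : ι → α) (c : AC ι α) : ℝ := c.eval (inputOf x)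

/-- The value `AC(y)` of the circuit at a partial instantiation `y`. -/
def evalP (y : ι → Option α) (c : AC ι α) : ℝ := c.eval (pinputOf y)

/-- Maximizer-circuit value at a full instantiation. -/
def evalMaxAt (x : ι → α) (c : AC ι α) : ℝ := c.evalMax (inputOf x)

/-- Maximizer-circuit value at a partial instantiation. -/
def evalMaxP (y : ι → Option α) (c : AC ι α) : ℝ := c.evalMax (pinputOf y)

/-- `vars n`: variables with some indicator at or under the node. -/
def vars : AC ι α → Finset ι
  | ind i _ => {i}
  | param _ => ∅
  | sum l r => l.vars ∪ r.vars
  | prod l r => l.vars ∪ r.vars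

/-- The multiset of parameters appearing in the circuit. -/
def params : AC ι α → Multiset ℝ
  | ind _ _ => 0
  | param θ => {θ}
  | sum l r => l.params + r.params
  | prod l r => l.params + r.params

/-- Decomposability: children of every `*`-node have disjoint variable sets. -/
def Decomposable : AC ι α → Prop
  | ind _ _ => True
  | param _ => True
  | sum l r => l.Decomposable ∧ r.Decomposable
  | prod l r => Disjoint l.vars r.vars ∧ l.Decomposable ∧ r.Decomposable

/-- Smoothness: every child of a `+`-node mentions the same variables as the node. -/
def Smooth : AC ι α → Prop
  | ind _ _ => True
  | param _ => True
  | sum l r => l.vars = r.vars ∧ l.Smooth ∧ r.Smooth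
  | prod l r => l.Smooth ∧ r.Smooth

/-- Determinism: under every full instantiation, every `+`-node has at most one
non-zero input. -/
def Deterministic : AC ι α → Prop
  | ind _ _ => True
  | param _ => True
  | sum l r => (∀ x : ι → α, l.evalAt x = 0 ∨ r.evalAt x = 0) ∧
      l.Deterministic ∧ r.Deterministic
  | prod l r => l.Deterministic ∧ r.Deterministic

/-- A full instantiation `x` is compatible with a partial instantiation `y`. -/
def Compat (x : ι → α) (y : ι → Option α) : Prop :=
  ∀ i, y i = none ∨ y i = some (x i)

instance (x : ι → α) (y : ι → Option α) : Decidable (Compat x y) := by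
  unfold Compat; infer_instance

/-- The graph of a full instantiation, i.e. its term `{(i, x i) | i}`. -/
def graphOf (x : ι → α) : Finset (ι × α) := Finset.univ.image fun i => (i, x i)

/-- The marginal `Σ_{x ∼ y} f(x)` of a factor `f` at a partial instantiation `y`. -/
def margSum (f : (ι → α) → ℝ) (y : ι → Option α) : ℝ :=
  ∑ x : ι → α, if Compat x y then f x else 0

/-- The circuit computes the factor `f`. -/
def Computes (c : AC ι α) (f : (ι → α) → ℝ) : Prop := ∀ x, c.evalAt x = f x

/-- The circuit computes the marginals of the factor `f`. -/
def ComputesMarginals (c : AC ι α) (f : (ι → α) → ℝ) : Prop :=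
  ∀ y : ι → Option α, c.evalP y = margSum f y

/-- The multiset of (term, coefficient) pairs of all complete subcircuits. -/
def subs : AC ι α → Multiset (Finset (ι × α) × ℝ)
  | ind i v => {({(i, v)}, 1)}
  | param θ => {(∅, θ)}
  | sum l r => l.subs + r.subs
  | prod l r => l.subs.bind fun a => r.subs.map fun b => (a.1 ∪ b.1, a.2 * b.2)

/-- Complete subcircuits of a circuit: choose one child of each `+`-node and all
children of each `*`-node. -/
inductive Sub : AC ι α → Type where
  | ind (i : ι) (v : α) : Sub (AC.ind i v)
  | param (θ : ℝ) : Sub (AC.param θ)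
  | sumL {l r : AC ι α} : Sub l → Sub (AC.sum l r)
  | sumR {l r : AC ι α} : Sub r → Sub (AC.sum l r)
  | prod {l r : AC ι α} : Sub l → Sub r → Sub (AC.prod l r)

/-- The term of a complete subcircuit: the set of indicator values appearing in it. -/
def Sub.term : {c : AC ι α} → Sub c → Finset (ι × α)
  | _, .ind i v => {(i, v)}
  | _, .param _ => ∅
  | _, .sumL s => s.term
  | _, .sumR s => s.term
  | _, .prod s t => s.term ∪ t.term

/-- The coefficient of a complete subcircuit: the product of its parameters. -/
def Sub.coeff : {c : AC ι α} → Sub c → ℝ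
  | _, .ind _ _ => 1
  | _, .param θ => θ
  | _, .sumL s => s.coeff
  | _, .sumR s => s.coeff
  | _, .prod s t => s.coeff * t.coeff


end AC


namespace AC

variable {ι α : Type} [Fintype ι] [DecidableEq ι] [Fintype α] [DecidableEq α]

lemma eval_nonneg (Λ : ι → α → Bool) :
    ∀ (c : AC ι α), (∀ θ ∈ c.params, 0 ≤ θ) → 0 ≤ c.eval Λ
  | ind i v, _ => by simp only [eval]; split <;> norm_num
  | param θ, hp => hp θ (by simp [params])
  | sum l r, hp => add_nonneg
      (eval_nonneg Λ l fun θ h => hp θ (by simp [params, h]))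
      (eval_nonneg Λ r fun θ h => hp θ (by simp [params, h]))
  | prod l r, hp => mul_nonneg
      (eval_nonneg Λ l fun θ h => hp θ (by simp [params, h]))
      (eval_nonneg Λ r fun θ h => hp θ (by simp [params, h]))

lemma evalAt_nonneg (c : AC ι α) (hp : ∀ θ ∈ c.params, 0 ≤ θ) (x : ι → α) :
    0 ≤ c.evalAt x := eval_nonneg _ c hp

lemma evalAt_congr : ∀ (c : AC ι α) (x x' : ι → α),
    (∀ i ∈ c.vars, x i = x' i) → c.evalAt x = c.evalAt x'
  | ind i v, x, x', h => by
      simp only [evalAt, eval, inputOf, h i (by simp [vars])]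
      rfl
  | param θ, _, _, _ => rfl
  | sum l r, x, x', h => by
      have hl := evalAt_congr l x x' (fun i hi => h i (by simp [vars, hi]))
      have hr := evalAt_congr r x x' (fun i hi => h i (by simp [vars, hi]))
      simp only [evalAt, eval] at hl hr ⊢
      rw [hl, hr]
  | prod l r, x, x', h => by
      have hl := evalAt_congr l x x' (fun i hi => h i (by simp [vars, hi]))
      have hr := evalAt_congr r x x' (fun i hi => h i (by simp [vars, hi]))
      simp only [evalAt, eval] at hl hr ⊢
      rw [hl, hr]

lemma compat_default [Nonempty α] (y : ι → Option α) :
    Compat (fun i => (y i).getD (Classical.arbitrary α)) y := by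
  intro i; cases h : y i <;> simp [h]

lemma evalMaxP_isGreatest [Nonempty α] :
    ∀ (c : AC ι α), c.Deterministic → c.Decomposable →
    (∀ θ ∈ c.params, 0 ≤ θ) → ∀ (y : ι → Option α),
    IsGreatest {r : ℝ | ∃ x : ι → α, Compat x y ∧ c.evalAt x = r} (c.evalMaxP y)
  | ind i v, _, _, _, y => by
    constructor
    · cases h : y i with
      | none =>
          refine ⟨Function.update (fun j => (y j).getD (Classical.arbitrary α)) i v, ?_, ?_⟩
          · intro j
            by_cases hj : j = i
            · subst hj; exact Or.inl h
            · have := compat_default y j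
              simpa [Function.update, hj] using this
          · simp [evalAt, eval, inputOf, evalMaxP, evalMax, pinputOf, h]
      | some w =>
          refine ⟨fun j => (y j).getD (Classical.arbitrary α), compat_default y, ?_⟩
          by_cases hwv : w = v <;>
            simp [evalAt, eval, inputOf, evalMaxP, evalMax, pinputOf, h, hwv] <;>
            first
              | rfl
              | exact fun hc => hwv hc.symm
              | exact fun hc => hwv hc
    · rintro r ⟨x, hx, rfl⟩
      cases h : y i with
      | none => simp [evalAt, eval, inputOf, evalMaxP, evalMax, pinputOf, h]; split <;> norm_num
      | some w =>
          rcases hx i with h' | h'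
          · rw [h] at h'; exact absurd h' (by simp)
          · rw [h] at h'
            have hw : w = x i := Option.some.inj h'
            subst hw
            simp [evalAt, eval, inputOf, evalMaxP, evalMax, pinputOf, h]
  | param θ, _, _, _, y => by
    constructor
    · exact ⟨fun j => (y j).getD (Classical.arbitrary α), compat_default y, rfl⟩
    · rintro r ⟨x, hx, rfl⟩; simp [evalAt, eval, evalMaxP, evalMax]
  | sum l r, hdet, hd, hp, y => by
    have hpl : ∀ θ ∈ l.params, 0 ≤ θ := fun θ h => hp θ (by simp [params, h])
    have hpr : ∀ θ ∈ r.params, 0 ≤ θ := fun θ h => hp θ (by simp [params, h])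
    obtain ⟨⟨xl, hxl, hxl2⟩, hubl⟩ := evalMaxP_isGreatest l hdet.2.1 hd.1 hpl y
    obtain ⟨⟨xr, hxr, hxr2⟩, hubr⟩ := evalMaxP_isGreatest r hdet.2.2 hd.2 hpr y
    have hMl : (0:ℝ) ≤ l.evalMaxP y := hxl2 ▸ evalAt_nonneg l hpl xl
    have hMr : (0:ℝ) ≤ r.evalMaxP y := hxr2 ▸ evalAt_nonneg r hpr xr
    have heval : ∀ x : ι → α, (sum l r).evalAt x = l.evalAt x + r.evalAt x := by
      intro x; simp [evalAt, eval]
    have hmax : (sum l r).evalMaxP y = max (l.evalMaxP y) (r.evalMaxP y) := by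
      simp [evalMaxP, evalMax]
    constructor
    · rw [hmax]
      rcases le_total (r.evalMaxP y) (l.evalMaxP y) with hle | hle
      · rw [max_eq_left hle]
        rcases hdet.1 xl with h0 | h0
        · -- l.evalAt xl = 0, so l.evalMaxP y = 0
          have hMl0 : l.evalMaxP y = 0 := by rw [← hxl2, h0]
          have hr0 : r.evalAt xl = 0 := le_antisymm
            ((hubr ⟨xl, hxl, rfl⟩).trans (hle.trans_eq hMl0)) (evalAt_nonneg r hpr xl)
          exact ⟨xl, hxl, by rw [heval, h0, hr0, hMl0]; ring⟩
        · exact ⟨xl, hxl, by rw [heval, h0, hxl2]; ring⟩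
      · rw [max_eq_right hle]
        rcases hdet.1 xr with h0 | h0
        · exact ⟨xr, hxr, by rw [heval, h0, hxr2]; ring⟩
        · have hMr0 : r.evalMaxP y = 0 := by rw [← hxr2, h0]
          have hl0 : l.evalAt xr = 0 := le_antisymm
            ((hubl ⟨xr, hxr, rfl⟩).trans (hle.trans_eq hMr0)) (evalAt_nonneg l hpl xr)
          exact ⟨xr, hxr, by rw [heval, h0, hl0, hMr0]; ring⟩
    · rintro s ⟨x, hx, rfl⟩
      rw [hmax, heval]
      rcases hdet.1 x with h0 | h0
      · rw [h0, zero_add]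
        exact le_max_of_le_right (hubr ⟨x, hx, rfl⟩)
      · rw [h0, add_zero]
        exact le_max_of_le_left (hubl ⟨x, hx, rfl⟩)
  | prod l r, hdet, hd, hp, y => by
    have hpl : ∀ θ ∈ l.params, 0 ≤ θ := fun θ h => hp θ (by simp [params, h])
    have hpr : ∀ θ ∈ r.params, 0 ≤ θ := fun θ h => hp θ (by simp [params, h])
    obtain ⟨⟨xl, hxl, hxl2⟩, hubl⟩ := evalMaxP_isGreatest l hdet.1 hd.2.1 hpl y
    obtain ⟨⟨xr, hxr, hxr2⟩, hubr⟩ := evalMaxP_isGreatest r hdet.2 hd.2.2 hpr y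
    have hMl : (0:ℝ) ≤ l.evalMaxP y := hxl2 ▸ evalAt_nonneg l hpl xl
    have hMr : (0:ℝ) ≤ r.evalMaxP y := hxr2 ▸ evalAt_nonneg r hpr xr
    have heval : ∀ x : ι → α, (prod l r).evalAt x = l.evalAt x * r.evalAt x := by
      intro x; simp [evalAt, eval]
    have hmax : (prod l r).evalMaxP y = l.evalMaxP y * r.evalMaxP y := by
      simp [evalMaxP, evalMax]
    constructor
    · set x : ι → α := fun i => if i ∈ l.vars then xl i else xr i with hxdef
      have hcx : Compat x y := by
        intro i
        by_cases hi : i ∈ l.vars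
        · simpa [hxdef, hi] using hxl i
        · simpa [hxdef, hi] using hxr i
      have hlx : l.evalAt x = l.evalMaxP y := by
        rw [← hxl2]; exact evalAt_congr l x xl (fun i hi => by simp [hxdef, hi])
      have hrx : r.evalAt x = r.evalMaxP y := by
        rw [← hxr2]
        refine evalAt_congr r x xr (fun i hi => ?_)
        have : i ∉ l.vars := fun h => (Finset.disjoint_left.mp hd.1 h) hi
        simp [hxdef, this]
      exact ⟨x, hcx, by rw [heval, hlx, hrx, hmax]⟩
    · rintro s ⟨x, hx, rfl⟩
      rw [hmax, heval]
      exact mul_le_mul (hubl ⟨x, hx, rfl⟩) (hubr ⟨x, hx, rfl⟩)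
        (evalAt_nonneg r hpr x) hMl

end AC


/-- Correctness of the maximizer circuit: for a deterministic, decomposable and
smooth circuit computing a factor `f`, the maximizer-circuit value at any partial
instantiation `y` is the maximum of `f(x)` over full instantiations `x ∼ y`. -/
theorem stmt7 {ι α : Type} [Fintype ι] [DecidableEq ι] [Fintype α] [DecidableEq α] [Nonempty α]
    (c : AC ι α) (hdet : c.Deterministic) (hd : c.Decomposable) (hs : c.Smooth)
    (hv : c.vars = Finset.univ) (hp : ∀ θ ∈ c.params, 0 ≤ θ)
    (f : (ι → α) → ℝ) (hf : ∀ x, 0 ≤ f x) (hc : c.Computes f) (y : ι → Option α) :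
    IsGreatest {r : ℝ | ∃ x : ι → α, AC.Compat x y ∧ f x = r} (c.evalMaxP y) := by
  have h := AC.evalMaxP_isGreatest c hdet hd hp y
  have hset : {r : ℝ | ∃ x : ι → α, AC.Compat x y ∧ f x = r}
      = {r : ℝ | ∃ x : ι → α, AC.Compat x y ∧ c.evalAt x = r} := by
    ext r; simp only [Set.mem_setOf_eq, hc _]
  rw [hset]
  exact h
end

section
/- Let f(X) be a Boolean factor (f(x) ∈ {0,1} for all x). Suppose AC(X) is an arithmetic circuit all of whose parameters lie in {0,1}, which is decomposable, smooth, free of dead nodes, and computes f. Then AC is deterministic: for every full instantiation x, every +-node has at most one non-zero input when the circuit is evaluated at x. -/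
namespace AC

variable {ι α : Type} [Fintype ι] [DecidableEq ι] [Fintype α] [DecidableEq α]

/-- Node occurrences (positions) in a circuit. -/
inductive Pos : AC ι α → Type where
  | here (c : AC ι α) : Pos c
  | sumL {l r : AC ι α} : Pos l → Pos (AC.sum l r)
  | sumR {l r : AC ι α} : Pos r → Pos (AC.sum l r)
  | prodL {l r : AC ι α} : Pos l → Pos (AC.prod l r)
  | prodR {l r : AC ι α} : Pos r → Pos (AC.prod l r)

/-- A complete subcircuit passes through (contains) a given node occurrence. -/
def Through : {c : AC ι α} → Sub c → Pos c → Prop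
  | _, _, .here _ => True
  | _, .sumL s, .sumL p => Through s p
  | _, .sumL _, .sumR _ => False
  | _, .sumR _, .sumL _ => False
  | _, .sumR s, .sumR p => Through s p
  | _, .prod s _, .prodL p => Through s p
  | _, .prod _ t, .prodR p => Through t p

end AC
namespace AC

variable {ι α : Type} [DecidableEq ι] [DecidableEq α]

/-- The node at a position. -/
def Pos.subtree : {c : AC ι α} → Pos c → AC ι α
  | c, .here _ => c
  | _, .sumL p => p.subtree
  | _, .sumR p => p.subtree
  | _, .prodL p => p.subtree
  | _, .prodR p => p.subtree

theorem Pos.smooth_subtree : {c : AC ι α} → (p : Pos c) → c.Smooth → p.subtree.Smooth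
  | _, .here _, h => h
  | _, .sumL p, h => p.smooth_subtree h.2.1
  | _, .sumR p, h => p.smooth_subtree h.2.2
  | _, .prodL p, h => p.smooth_subtree h.1
  | _, .prodR p, h => p.smooth_subtree h.2

theorem Pos.decomp_subtree : {c : AC ι α} → (p : Pos c) → c.Decomposable → p.subtree.Decomposable
  | _, .here _, h => h
  | _, .sumL p, h => p.decomp_subtree h.1
  | _, .sumR p, h => p.decomp_subtree h.2
  | _, .prodL p, h => p.decomp_subtree h.2.1
  | _, .prodR p, h => p.decomp_subtree h.2.2

theorem Pos.params_subtree : {c : AC ι α} → (p : Pos c) → ∀ θ ∈ p.subtree.params, θ ∈ c.params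
  | _, .here _, θ, h => h
  | _, .sumL p, θ, h => Multiset.mem_add.2 (Or.inl (p.params_subtree θ h))
  | _, .sumR p, θ, h => Multiset.mem_add.2 (Or.inr (p.params_subtree θ h))
  | _, .prodL p, θ, h => Multiset.mem_add.2 (Or.inl (p.params_subtree θ h))
  | _, .prodR p, θ, h => Multiset.mem_add.2 (Or.inr (p.params_subtree θ h))

/-- Replace the part of a complete subcircuit under position `p` by another
complete subcircuit of the node at `p`. -/
def Sub.replace : {c : AC ι α} → (s : Sub c) → (p : Pos c) → Through s p → Sub p.subtree → Sub c
  | _, _, .here _, _, t => t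
  | _, .sumL s, .sumL p, h, t => .sumL (s.replace p h t)
  | _, .sumL _, .sumR _, h, _ => False.elim h
  | _, .sumR _, .sumL _, h, _ => False.elim h
  | _, .sumR s, .sumR p, h, t => .sumR (s.replace p h t)
  | _, .prod s u, .prodL p, h, t => .prod (s.replace p h t) u
  | _, .prod s u, .prodR p, h, t => .prod s (u.replace p h t)

/-- The part of a complete subcircuit under position `p`. -/
def Sub.restrict : {c : AC ι α} → (s : Sub c) → (p : Pos c) → Through s p → Sub p.subtree
  | _, s, .here _, _ => s
  | _, .sumL s, .sumL p, h => s.restrict p h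
  | _, .sumL _, .sumR _, h => False.elim h
  | _, .sumR _, .sumL _, h => False.elim h
  | _, .sumR s, .sumR p, h => s.restrict p h
  | _, .prod s _, .prodL p, h => s.restrict p h
  | _, .prod _ u, .prodR p, h => u.restrict p h

/-- Product of parameters of a subcircuit outside position `p`. -/
def Sub.coeffOut : {c : AC ι α} → (s : Sub c) → (p : Pos c) → Through s p → ℝ
  | _, _, .here _, _ => 1
  | _, .sumL s, .sumL p, h => s.coeffOut p h
  | _, .sumL _, .sumR _, h => False.elim h
  | _, .sumR _, .sumL _, h => False.elim h
  | _, .sumR s, .sumR p, h => s.coeffOut p h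
  | _, .prod s u, .prodL p, h => s.coeffOut p h * u.coeff
  | _, .prod s u, .prodR p, h => s.coeff * u.coeffOut p h

/-- Term of a subcircuit outside position `p`. -/
def Sub.termOut :
    {c : AC ι α} → (s : Sub c) → (p : Pos c) → Through s p → Finset (ι × α)
  | _, _, .here _, _ => ∅
  | _, .sumL s, .sumL p, h => s.termOut p h
  | _, .sumL _, .sumR _, h => False.elim h
  | _, .sumR _, .sumL _, h => False.elim h
  | _, .sumR s, .sumR p, h => s.termOut p h
  | _, .prod s u, .prodL p, h => s.termOut p h ∪ u.term
  | _, .prod s u, .prodR p, h => s.term ∪ u.termOut p h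

theorem Sub.coeff_replace : {c : AC ι α} → (s : Sub c) → (p : Pos c) → (h : Through s p) →
    (t : Sub p.subtree) → (s.replace p h t).coeff = s.coeffOut p h * t.coeff
  | _, s, .here _, _, t => by simp [Sub.replace, Sub.coeffOut]; rfl
  | _, .sumL s, .sumL p, h, t => s.coeff_replace p h t
  | _, .sumL _, .sumR _, h, _ => False.elim h
  | _, .sumR _, .sumL _, h, _ => False.elim h
  | _, .sumR s, .sumR p, h, t => s.coeff_replace p h t
  | _, .prod s u, .prodL p, h, t => by
      show (s.replace p h t).coeff * u.coeff = s.coeffOut p h * u.coeff * t.coeff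
      rw [s.coeff_replace p h t]; exact mul_right_comm _ _ _
  | _, .prod s u, .prodR p, h, t => by
      show s.coeff * (u.replace p h t).coeff = s.coeff * u.coeffOut p h * t.coeff
      rw [u.coeff_replace p h t]; exact (mul_assoc _ _ _).symm

theorem Sub.term_replace : {c : AC ι α} → (s : Sub c) →
    (p : Pos c) → (h : Through s p) →
    (t : Sub p.subtree) → (s.replace p h t).term = s.termOut p h ∪ t.term
  | _, s, .here _, _, t => by simp [Sub.replace, Sub.termOut]; rfl
  | _, .sumL s, .sumL p, h, t => s.term_replace p h t
  | _, .sumL _, .sumR _, h, _ => False.elim h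
  | _, .sumR _, .sumL _, h, _ => False.elim h
  | _, .sumR s, .sumR p, h, t => s.term_replace p h t
  | _, .prod s u, .prodL p, h, t => by
      show (s.replace p h t).term ∪ u.term = s.termOut p h ∪ u.term ∪ t.term
      rw [s.term_replace p h t, Finset.union_right_comm]; rfl
  | _, .prod s u, .prodR p, h, t => by
      show s.term ∪ (u.replace p h t).term = s.term ∪ u.termOut p h ∪ t.term
      rw [u.term_replace p h t, Finset.union_assoc]; rfl

theorem Sub.coeff_eq_out_mul : {c : AC ι α} → (s : Sub c) → (p : Pos c) → (h : Through s p) →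
    s.coeff = s.coeffOut p h * (s.restrict p h).coeff
  | _, s, .here _, _ => by simp [Sub.restrict, Sub.coeffOut]; rfl
  | _, .sumL s, .sumL p, h => s.coeff_eq_out_mul p h
  | _, .sumL _, .sumR _, h => False.elim h
  | _, .sumR _, .sumL _, h => False.elim h
  | _, .sumR s, .sumR p, h => s.coeff_eq_out_mul p h
  | _, .prod s u, .prodL p, h => by
      show s.coeff * u.coeff = s.coeffOut p h * u.coeff * (s.restrict p h).coeff
      rw [s.coeff_eq_out_mul p h]; ring
  | _, .prod s u, .prodR p, h => by
      show s.coeff * u.coeff = s.coeff * u.coeffOut p h * (u.restrict p h).coeff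
      rw [u.coeff_eq_out_mul p h]; ring

theorem Sub.replace_inj : {c : AC ι α} → (s : Sub c) → (p : Pos c) → (h : Through s p) →
    (t₁ t₂ : Sub p.subtree) → s.replace p h t₁ = s.replace p h t₂ → t₁ = t₂
  | _, s, .here _, _, t₁, t₂, H => by simp only [Sub.replace] at H; exact H
  | _, .sumL s, .sumL p, h, t₁, t₂, H => s.replace_inj p h t₁ t₂ (by injection H)
  | _, .sumL _, .sumR _, h, _, _, _ => False.elim h
  | _, .sumR _, .sumL _, h, _, _, _ => False.elim h
  | _, .sumR s, .sumR p, h, t₁, t₂, H => s.replace_inj p h t₁ t₂ (by injection H)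
  | _, .prod s u, .prodL p, h, t₁, t₂, H => s.replace_inj p h t₁ t₂ (by injection H)
  | _, .prod s u, .prodR p, h, t₁, t₂, H => u.replace_inj p h t₁ t₂ (by injection H)

end AC
namespace AC

variable {ι α : Type} [Fintype ι] [DecidableEq ι] [Fintype α] [DecidableEq α]

def subEquivInd (i : ι) (v : α) : Sub (AC.ind i v (α := α)) ≃ Unit where
  toFun _ := ()
  invFun _ := .ind i v
  left_inv s := by cases s; rfl
  right_inv _ := rfl

def subEquivParam (θ : ℝ) : Sub (AC.param θ (ι := ι) (α := α)) ≃ Unit where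
  toFun _ := ()
  invFun _ := .param θ
  left_inv s := by cases s; rfl
  right_inv _ := rfl

def subEquivSum (l r : AC ι α) : Sub (AC.sum l r) ≃ (Sub l ⊕ Sub r) where
  toFun s := match s with
    | .sumL a => Sum.inl a
    | .sumR a => Sum.inr a
  invFun s := match s with
    | .inl a => .sumL a
    | .inr a => .sumR a
  left_inv s := by cases s <;> rfl
  right_inv s := by cases s <;> rfl

def subEquivProd (l r : AC ι α) : Sub (AC.prod l r) ≃ (Sub l × Sub r) where
  toFun s := match s with
    | .prod a b => (a, b)
  invFun s := .prod s.1 s.2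
  left_inv s := by cases s; rfl
  right_inv s := rfl

instance instFintypeSub : (c : AC ι α) → Fintype (Sub c)
  | .ind i v => Fintype.ofEquiv Unit (subEquivInd i v).symm
  | .param θ => Fintype.ofEquiv Unit (subEquivParam θ).symm
  | .sum l r =>
      letI := instFintypeSub l; letI := instFintypeSub r
      Fintype.ofEquiv _ (subEquivSum l r).symm
  | .prod l r =>
      letI := instFintypeSub l; letI := instFintypeSub r
      Fintype.ofEquiv _ (subEquivProd l r).symm

/-- Indicator that every element of `A` is set in `Λ`. -/
def indic (Λ : ι → α → Bool) (A : Finset (ι × α)) : ℝ :=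
  if ∀ q ∈ A, Λ q.1 q.2 then 1 else 0

theorem indic_union (Λ : ι → α → Bool) (A B : Finset (ι × α)) :
    indic Λ (A ∪ B) = indic Λ A * indic Λ B := by
  have h : (∀ q ∈ A ∪ B, Λ q.1 q.2) ↔ (∀ q ∈ A, Λ q.1 q.2) ∧ (∀ q ∈ B, Λ q.1 q.2) :=
    Finset.forall_mem_union
  unfold indic
  by_cases hA : ∀ q ∈ A, Λ q.1 q.2
  · by_cases hB : ∀ q ∈ B, Λ q.1 q.2
    · rw [if_pos hA, if_pos hB, if_pos (h.2 ⟨hA, hB⟩), one_mul]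
    · rw [if_pos hA, if_neg hB, if_neg (fun hh => hB (h.1 hh).2), one_mul]
  · rw [if_neg hA, if_neg (fun hh => hA (h.1 hh).1), zero_mul]

theorem eval_eq_sum (Λ : ι → α → Bool) :
    (c : AC ι α) → c.eval Λ = ∑ s : Sub c, s.coeff * indic Λ s.term
  | .ind i v => by
      rw [← (subEquivInd i v).symm.sum_comp (fun s => s.coeff * indic Λ s.term)]
      simp [eval, Sub.coeff, Sub.term, subEquivInd, indic]
  | .param θ => by
      rw [← (subEquivParam θ).symm.sum_comp (fun s => s.coeff * indic Λ s.term)]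
      simp [eval, Sub.coeff, Sub.term, subEquivParam, indic]
  | .sum l r => by
      rw [← (subEquivSum l r).symm.sum_comp (fun s => s.coeff * indic Λ s.term)]
      rw [Fintype.sum_sum_type]
      show l.eval Λ + r.eval Λ = _
      rw [eval_eq_sum Λ l, eval_eq_sum Λ r]
      simp [subEquivSum, Sub.coeff, Sub.term]
  | .prod l r => by
      rw [← (subEquivProd l r).symm.sum_comp (fun s => s.coeff * indic Λ s.term)]
      rw [Fintype.sum_prod_type]
      show l.eval Λ * r.eval Λ = _
      rw [eval_eq_sum Λ l, eval_eq_sum Λ r, Finset.sum_mul_sum]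
      refine Finset.sum_congr rfl fun a _ => Finset.sum_congr rfl fun b _ => ?_
      simp [subEquivProd, Sub.coeff, Sub.term, indic_union]
      ring

end AC
namespace AC

variable {ι α : Type} [Fintype ι] [DecidableEq ι] [Fintype α] [DecidableEq α]

theorem Sub.fst_mem_vars : {c : AC ι α} → (s : Sub c) → ∀ q ∈ s.term, q.1 ∈ c.vars
  | _, .ind i v, q, hq => by
      simp only [Sub.term, Finset.mem_singleton] at hq
      simp [vars, hq]
  | _, .param _, q, hq => by simp [Sub.term] at hq
  | _, .sumL s, q, hq => Finset.mem_union.2 (Or.inl (s.fst_mem_vars q hq))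
  | _, .sumR s, q, hq => Finset.mem_union.2 (Or.inr (s.fst_mem_vars q hq))
  | _, .prod s t, q, hq => by
      rcases Finset.mem_union.1 hq with h | h
      · exact Finset.mem_union.2 (Or.inl (s.fst_mem_vars q h))
      · exact Finset.mem_union.2 (Or.inr (t.fst_mem_vars q h))

theorem Sub.term_cover : {c : AC ι α} → c.Smooth → (s : Sub c) →
    ∀ i ∈ c.vars, ∃ v, (i, v) ∈ s.term
  | _, _, .ind i v, j, hj => by
      simp only [vars, Finset.mem_singleton] at hj
      exact ⟨v, by simp [Sub.term, hj]⟩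
  | _, _, .param _, j, hj => by simp [vars] at hj
  | _, hs, .sumL s, j, hj => by
      rcases Finset.mem_union.1 hj with h | h
      · exact s.term_cover hs.2.1 j h
      · exact s.term_cover hs.2.1 j (hs.1 ▸ h)
  | _, hs, .sumR s, j, hj => by
      rcases Finset.mem_union.1 hj with h | h
      · exact s.term_cover hs.2.2 j (hs.1 ▸ h)
      · exact s.term_cover hs.2.2 j h
  | _, hs, .prod s t, j, hj => by
      rcases Finset.mem_union.1 hj with h | h
      · obtain ⟨v, hv⟩ := s.term_cover hs.1 j h
        exact ⟨v, Finset.mem_union.2 (Or.inl hv)⟩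
      · obtain ⟨v, hv⟩ := t.term_cover hs.2 j h
        exact ⟨v, Finset.mem_union.2 (Or.inr hv)⟩

theorem Sub.term_fun : {c : AC ι α} → c.Decomposable → (s : Sub c) →
    ∀ i v w, (i, v) ∈ s.term → (i, w) ∈ s.term → v = w
  | _, _, .ind _ _, i, v, w, hv, hw => by
      simp only [Sub.term, Finset.mem_singleton, Prod.mk.injEq] at hv hw
      rw [hv.2, hw.2]
  | _, _, .param _, i, v, w, hv, _ => by simp [Sub.term] at hv
  | _, hd, .sumL s, i, v, w, hv, hw => s.term_fun hd.1 i v w hv hw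
  | _, hd, .sumR s, i, v, w, hv, hw => s.term_fun hd.2 i v w hv hw
  | _, hd, .prod s t, i, v, w, hv, hw => by
      rcases Finset.mem_union.1 hv with h1 | h1 <;> rcases Finset.mem_union.1 hw with h2 | h2
      · exact s.term_fun hd.2.1 i v w h1 h2
      · exact absurd (t.fst_mem_vars (i, w) h2)
          (Finset.disjoint_left.1 hd.1 (s.fst_mem_vars (i, v) h1))
      · exact absurd (t.fst_mem_vars (i, v) h1)
          (Finset.disjoint_left.1 hd.1 (s.fst_mem_vars (i, w) h2))
      · exact t.term_fun hd.2.2 i v w h1 h2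

theorem Sub.coeff01 : {c : AC ι α} → (∀ θ ∈ c.params, θ = 0 ∨ θ = 1) → (s : Sub c) →
    s.coeff = 0 ∨ s.coeff = 1
  | _, _, .ind _ _ => Or.inr rfl
  | .param θ, h, .param _ => h θ (Multiset.mem_singleton.2 rfl)
  | _, h, .sumL s => s.coeff01 (fun θ hθ => h θ (Multiset.mem_add.2 (Or.inl hθ)))
  | _, h, .sumR s => s.coeff01 (fun θ hθ => h θ (Multiset.mem_add.2 (Or.inr hθ)))
  | _, h, .prod s t => by
      rcases s.coeff01 (fun θ hθ => h θ (Multiset.mem_add.2 (Or.inl hθ))) with h1 | h1 <;>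
        rcases t.coeff01 (fun θ hθ => h θ (Multiset.mem_add.2 (Or.inr hθ))) with h2 | h2 <;>
        simp [Sub.coeff, h1, h2]

/-- Local determinism condition at a node. -/
def DetAt : AC ι α → Prop
  | .sum l r => ∀ x : ι → α, l.evalAt x = 0 ∨ r.evalAt x = 0
  | _ => True

theorem det_of_detAt : (c : AC ι α) → (∀ p : Pos c, DetAt p.subtree) → c.Deterministic
  | .ind _ _, _ => trivial
  | .param _, _ => trivial
  | .sum l r, H => ⟨H (.here _), det_of_detAt l (fun p => H (.sumL p)),
      det_of_detAt r (fun p => H (.sumR p))⟩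
  | .prod l r, H => ⟨det_of_detAt l (fun p => H (.prodL p)),
      det_of_detAt r (fun p => H (.prodR p))⟩

theorem exists_sub_of_evalAt_ne_zero (c : AC ι α) (x : ι → α) (h : c.evalAt x ≠ 0) :
    ∃ s : Sub c, s.coeff ≠ 0 ∧ ∀ q ∈ s.term, x q.1 = q.2 := by
  rw [evalAt, eval_eq_sum] at h
  obtain ⟨s, -, hs⟩ := Finset.exists_ne_zero_of_sum_ne_zero h
  refine ⟨s, left_ne_zero_of_mul hs, ?_⟩
  have h2 := right_ne_zero_of_mul hs
  unfold indic at h2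
  split_ifs at h2 with hh
  · intro q hq; simpa [inputOf] using hh q hq
  · exact absurd rfl h2

theorem indic_inputOf_eq_one {x : ι → α} {A : Finset (ι × α)}
    (h : ∀ q ∈ A, x q.1 = q.2) : indic (inputOf x) A = 1 :=
  if_pos (by intro q hq; simpa [inputOf] using h q hq)

theorem term_eq_image {c : AC ι α} (hs : c.Smooth) (s : Sub c) (x : ι → α)
    (hcomp : ∀ q ∈ s.term, x q.1 = q.2) :
    s.term = c.vars.image (fun i => (i, x i)) := by
  ext ⟨i, v⟩
  simp only [Finset.mem_image]
  constructor
  · intro h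
    exact ⟨i, s.fst_mem_vars (i, v) h, by rw [hcomp (i, v) h]⟩
  · rintro ⟨j, hj, he⟩
    obtain ⟨w, hw⟩ := s.term_cover hs j hj
    have hxw : x j = w := hcomp (j, w) hw
    cases he
    rw [hxw]
    exact hw

theorem coeff_cast {c c' : AC ι α} (h : c = c') (s : Sub c) : (h ▸ s).coeff = s.coeff := by
  subst h; rfl

theorem term_cast {c c' : AC ι α} (h : c = c') (s : Sub c) : (h ▸ s).term = s.term := by
  subst h; rfl

theorem cast_inj {c c' : AC ι α} (h : c = c') {s s' : Sub c} (he : h ▸ s = h ▸ s') : s = s' := by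
  subst h; exact he

end AC


/-- Parametric incompleteness: a decomposable, smooth circuit with all parameters
in `{0,1}`, free of dead nodes, that computes a Boolean factor must be
deterministic. -/
theorem stmt9 {ι α : Type} [Fintype ι] [DecidableEq ι] [Fintype α] [DecidableEq α]
    (c : AC ι α) (f : (ι → α) → ℝ) (hbool : ∀ x, f x = 0 ∨ f x = 1)
    (hparams : ∀ θ ∈ c.params, θ = 0 ∨ θ = 1)
    (hd : c.Decomposable) (hs : c.Smooth) (hv : c.vars = Finset.univ)
    (hnd : ∀ p : AC.Pos c, ∃ s : AC.Sub c, AC.Through s p ∧ s.coeff ≠ 0)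
    (hc : c.Computes f) :
    c.Deterministic := by
  classical
  apply AC.det_of_detAt
  intro p
  have hparams' : ∀ θ ∈ (AC.Pos.subtree p).params, θ = 0 ∨ θ = 1 :=
    fun θ hθ => hparams θ (p.params_subtree θ hθ)
  have hsm : (AC.Pos.subtree p).Smooth := p.smooth_subtree hs
  generalize hq : p.subtree = d
  cases d with
  | ind i v => trivial
  | param θ => trivial
  | prod l' r' => trivial
  | sum l' r' =>
    intro x
    by_contra hcon
    push_neg at hcon
    obtain ⟨hl, hr⟩ := hcon
    have hsmooth' : (AC.sum l' r').Smooth := hq ▸ hsm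
    obtain ⟨sl, hsl0, hslc⟩ := AC.exists_sub_of_evalAt_ne_zero l' x hl
    obtain ⟨sr, hsr0, hsrc⟩ := AC.exists_sub_of_evalAt_ne_zero r' x hr
    obtain ⟨s₀, hth, hc0⟩ := hnd p
    set t₁ : AC.Sub p.subtree := hq.symm ▸ AC.Sub.sumL sl with ht₁
    set t₂ : AC.Sub p.subtree := hq.symm ▸ AC.Sub.sumR sr with ht₂
    set s₁ := s₀.replace p hth t₁ with hs₁def
    set s₂ := s₀.replace p hth t₂ with hs₂def
    have hcoefft₁ : t₁.coeff = sl.coeff := AC.coeff_cast hq.symm _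
    have hcoefft₂ : t₂.coeff = sr.coeff := AC.coeff_cast hq.symm _
    have hOut : s₀.coeffOut p hth ≠ 0 := fun h0 =>
      hc0 (by rw [s₀.coeff_eq_out_mul p hth, h0, zero_mul])
    have hs₁0 : s₁.coeff ≠ 0 := by
      rw [hs₁def, AC.Sub.coeff_replace, hcoefft₁]
      exact mul_ne_zero hOut hsl0
    have hs₂0 : s₂.coeff ≠ 0 := by
      rw [hs₂def, AC.Sub.coeff_replace, hcoefft₂]
      exact mul_ne_zero hOut hsr0
    have hs₁1 : s₁.coeff = 1 := (AC.Sub.coeff01 hparams s₁).resolve_left hs₁0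
    have hs₂1 : s₂.coeff = 1 := (AC.Sub.coeff01 hparams s₂).resolve_left hs₂0
    have htermt₁ : t₁.term = sl.term := AC.term_cast hq.symm _
    have htermt₂ : t₂.term = sr.term := AC.term_cast hq.symm _
    have hterm_eq : t₁.term = t₂.term := by
      rw [htermt₁, htermt₂, AC.term_eq_image hsmooth'.2.1 sl x hslc,
        AC.term_eq_image hsmooth'.2.2 sr x hsrc, hsmooth'.1]
    have hterm12 : s₁.term = s₂.term := by
      rw [hs₁def, hs₂def, AC.Sub.term_replace, AC.Sub.term_replace, hterm_eq]
    have hne : s₁ ≠ s₂ := by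
      intro h
      have h2 := AC.cast_inj hq.symm (s₀.replace_inj p hth t₁ t₂ h)
      cases h2
    have hcover : ∀ i : ι, ∃ v, (i, v) ∈ s₁.term := fun i =>
      AC.Sub.term_cover hs s₁ i (by rw [hv]; exact Finset.mem_univ i)
    set x'' : ι → α := fun i => Classical.choose (hcover i) with hx''def
    have hx'' : ∀ i, (i, x'' i) ∈ s₁.term := fun i => Classical.choose_spec (hcover i)
    have hcompat : ∀ q ∈ s₁.term, x'' q.1 = q.2 := by
      rintro ⟨i, v⟩ hqv
      exact AC.Sub.term_fun hd s₁ i (x'' i) v (hx'' i) hqv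
    have hFle : f x'' ≤ 1 := by rcases hbool x'' with h | h <;> rw [h] <;> norm_num
    have heval : c.evalAt x'' = f x'' := hc x''
    have hsum : c.evalAt x'' = ∑ s : AC.Sub c, s.coeff * AC.indic (AC.inputOf x'') s.term :=
      AC.eval_eq_sum _ c
    have hnonneg : ∀ s : AC.Sub c, 0 ≤ s.coeff * AC.indic (AC.inputOf x'') s.term := by
      intro s
      have h1 : 0 ≤ s.coeff := by
        rcases AC.Sub.coeff01 hparams s with h | h <;> rw [h] <;> norm_num
      have h2 : 0 ≤ AC.indic (AC.inputOf x'') s.term := by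
        unfold AC.indic; split <;> norm_num
      exact mul_nonneg h1 h2
    have hind1 : AC.indic (AC.inputOf x'') s₁.term = 1 := AC.indic_inputOf_eq_one hcompat
    have hind2 : AC.indic (AC.inputOf x'') s₂.term = 1 := by rw [← hterm12]; exact hind1
    have hpair : ∑ s ∈ ({s₁, s₂} : Finset (AC.Sub c)),
        s.coeff * AC.indic (AC.inputOf x'') s.term = 2 := by
      rw [Finset.sum_pair hne, hs₁1, hs₂1, hind1, hind2]; norm_num
    have hle : (2 : ℝ) ≤ c.evalAt x'' := by
      rw [hsum, ← hpair]
      exact Finset.sum_le_sum_of_subset_of_nonneg (Finset.subset_univ _) (fun s _ _ => hnonneg s)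
    rw [heval] at hle
    linarith
end
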